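/- For SAGA-RR with step size μ > 0, the forward inner difference in epoch t ≥ 1 satisfies Σ_{i=1}^{N−1} E‖w_i^t − w_0^t‖² ≤ 5δ²μ²N² ( Σ_{i=1}^{N−1} E‖w_i^t − w_0^t‖² + Σ_{i=1}^{N−1} E‖w_N^{t−1} − w_i^{t−1}‖² ) + 3δ²μ²N³ E‖w̃_0^t‖². -/

import Mathlib

open MeasureTheory ProbabilityTheory Finset
open scoped RealInnerProductSpace ENNReal

lemma four_sq_aux (a b c d : ℝ) : (a + b + c + d)^2 ≤ 4*(a^2+b^2+c^2+d^2) := by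
  nlinarith [sq_nonneg (a-b), sq_nonneg (a-c), sq_nonneg (a-d), sq_nonneg (b-c),
    sq_nonneg (b-d), sq_nonneg (c-d)]

set_option maxHeartbeats 1000000 in
lemma saga_pointwise {N : ℕ} (hN : 1 ≤ N)
    {E : Type*} [NormedAddCommGroup E] [NormedSpace ℝ E]
    (Qg : Fin N → E → E) (δ : ℝ) (hδ : 0 < δ)
    (hLip : ∀ n x y, ‖Qg n x - Qg n y‖ ≤ δ * ‖x - y‖)
    (wstar : E) (hstar : ∑ m, Qg m wstar = 0)
    (μ : ℝ) (hμpos : 0 < μ)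
    (σ τ : Equiv.Perm (Fin N)) (a b : ℕ → E)
    (hab : a 0 = b N)
    (hrec : ∀ i : Fin N, a ((i:ℕ)+1) = a (i:ℕ) - μ •
      (Qg (σ i) (a (i:ℕ)) - Qg (σ i) (b ((τ.symm (σ i) : ℕ) + 1))
        + (N:ℝ)⁻¹ • ∑ m, Qg m (if ((σ.symm m : Fin N) : ℕ) < (i:ℕ)
            then a ((σ.symm m : ℕ)+1) else b ((τ.symm m : ℕ)+1)))) :
    ∑ i ∈ Finset.Ico 1 N, ‖a i - a 0‖^2 ≤
      5*δ^2*μ^2*(N:ℝ)^2*((∑ i ∈ Finset.Ico 1 N, ‖a i - a 0‖^2)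
          + ∑ i ∈ Finset.Ico 1 N, ‖b N - b i‖^2)
        + 3*δ^2*μ^2*(N:ℝ)^3*‖wstar - a 0‖^2 := by
  have hNpos : 0 < N := hN
  have hNR : (0:ℝ) < N := by exact_mod_cast hNpos
  set S1 := ∑ i ∈ Finset.Ico 1 N, ‖a i - a 0‖^2 with hS1
  set S2 := ∑ i ∈ Finset.Ico 1 N, ‖b N - b i‖^2 with hS2
  set V := ‖wstar - a 0‖^2 with hV
  set c : ℕ → Fin N → E := fun j m => if ((σ.symm m : Fin N) : ℕ) < j
      then a ((σ.symm m : ℕ)+1) else b ((τ.symm m : ℕ)+1) with hc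
  set g : ℕ → E := fun j => if h : j < N then
      Qg (σ ⟨j,h⟩) (a j) - Qg (σ ⟨j,h⟩) (b ((τ.symm (σ ⟨j,h⟩) : ℕ) + 1))
        + (N:ℝ)⁻¹ • ∑ m, Qg m (c j m)
    else 0 with hg
  -- iterates as partial sums
  have hstep : ∀ i, i ≤ N → a i = a 0 - μ • ∑ j ∈ Finset.range i, g j := by
    intro i hi
    induction i with
    | zero => simp
    | succ k ih =>
      have hkN : k < N := hi
      have h1 : a (k+1) = a k - μ • g k := by
        have h := hrec ⟨k, hkN⟩
        simp only [hg, hc]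
        rw [dif_pos hkN]
        exact h
      rw [h1, ih (Nat.le_of_succ_le hi), Finset.sum_range_succ, smul_add, sub_sub]
  -- sum over τ gives S2
  have hτS2 : ∑ m : Fin N, ‖a 0 - b ((τ.symm m : ℕ)+1)‖^2 = S2 := by
    rw [hab]
    calc ∑ m : Fin N, ‖b N - b ((τ.symm m : ℕ)+1)‖^2
        = ∑ k : Fin N, ‖b N - b ((k:ℕ)+1)‖^2 :=
          Equiv.sum_comp τ.symm (fun k : Fin N => ‖b N - b ((k:ℕ)+1)‖^2)
      _ = ∑ j ∈ Finset.range N, ‖b N - b (j+1)‖^2 :=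
          Fin.sum_univ_eq_sum_range (fun j => ‖b N - b (j+1)‖^2) N
      _ = ∑ i ∈ Finset.Ico 1 (N+1), ‖b N - b i‖^2 := by
          rw [Finset.sum_Ico_eq_sum_range]
          simp only [Nat.add_sub_cancel]
          exact Finset.sum_congr rfl fun i _ => by rw [Nat.add_comm]
      _ = S2 := by
          rw [Finset.sum_Ico_succ_top hN]
          simp [hS2]
  have hBsum : ∑ j : Fin N, ‖a 0 - b ((τ.symm (σ j) : ℕ)+1)‖^2 = S2 :=
    (Equiv.sum_comp σ (fun m : Fin N => ‖a 0 - b ((τ.symm m : ℕ)+1)‖^2)).trans hτS2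
  have hAsum : ∑ j : Fin N, ‖a (j:ℕ) - a 0‖^2 ≤ S1 := by
    rw [Fin.sum_univ_eq_sum_range (fun j => ‖a j - a 0‖^2) N, Finset.range_eq_Ico,
      Finset.sum_eq_sum_Ico_succ_bot hNpos]
    simp [hS1]
  -- per-j bound on the φ-sum
  have hCper : ∀ j : Fin N, ∑ m, ‖c (j:ℕ) m - a 0‖^2 ≤ S1 + S2 := by
    intro j
    have h1 : ∑ m, ‖c (j:ℕ) m - a 0‖^2 = ∑ k : Fin N, ‖c (j:ℕ) (σ k) - a 0‖^2 :=
      (Equiv.sum_comp σ (fun m : Fin N => ‖c (j:ℕ) m - a 0‖^2)).symm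
    rw [h1]
    have h2 : ∀ k : Fin N, ‖c (j:ℕ) (σ k) - a 0‖^2 ≤
        (if (k:ℕ) < (j:ℕ) then ‖a ((k:ℕ)+1) - a 0‖^2 else 0)
          + ‖a 0 - b ((τ.symm (σ k) : ℕ)+1)‖^2 := by
      intro k
      have hck : c (j:ℕ) (σ k) = if (k:ℕ) < (j:ℕ) then a ((k:ℕ)+1)
          else b ((τ.symm (σ k) : ℕ)+1) := by
        simp [hc]
      rw [hck]
      split_ifs with h
      · have := sq_nonneg ‖a 0 - b ((τ.symm (σ k) : ℕ)+1)‖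
        linarith
      · rw [norm_sub_rev]
        have := sq_nonneg ‖a ((k:ℕ)+1) - a 0‖
        linarith
    calc ∑ k : Fin N, ‖c (j:ℕ) (σ k) - a 0‖^2
        ≤ ∑ k : Fin N, ((if (k:ℕ) < (j:ℕ) then ‖a ((k:ℕ)+1) - a 0‖^2 else 0)
            + ‖a 0 - b ((τ.symm (σ k) : ℕ)+1)‖^2) :=
          Finset.sum_le_sum (fun k _ => h2 k)
      _ = (∑ k : Fin N, if (k:ℕ) < (j:ℕ) then ‖a ((k:ℕ)+1) - a 0‖^2 else 0)
            + ∑ k : Fin N, ‖a 0 - b ((τ.symm (σ k) : ℕ)+1)‖^2 :=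
          Finset.sum_add_distrib
      _ ≤ S1 + S2 := by
          refine add_le_add ?_ (le_of_eq hBsum)
          rw [Fin.sum_univ_eq_sum_range (fun k => if k < (j:ℕ)
            then ‖a (k+1) - a 0‖^2 else 0) N]
          rw [← Finset.sum_filter]
          have hfil : (Finset.range N).filter (· < (j:ℕ)) = Finset.range (j:ℕ) := by
            ext k
            simp only [Finset.mem_filter, Finset.mem_range]
            constructor
            · rintro ⟨_, h⟩; exact h
            · intro h; exact ⟨h.trans j.isLt, h⟩
          rw [hfil]
          have : ∑ k ∈ Finset.range (j:ℕ), ‖a (k+1) - a 0‖^2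
              = ∑ i ∈ Finset.Ico 1 ((j:ℕ)+1), ‖a i - a 0‖^2 := by
            rw [Finset.sum_Ico_eq_sum_range]
            simp only [Nat.add_sub_cancel]
            exact (Finset.sum_congr rfl fun i _ => by rw [Nat.add_comm]).symm
          rw [this, hS1]
          refine Finset.sum_le_sum_of_subset_of_nonneg ?_ (fun _ _ _ => sq_nonneg _)
          exact Finset.Ico_subset_Ico le_rfl j.isLt
  -- per-j bound on the update vector
  have hgbound : ∀ j : Fin N, ‖g (j:ℕ)‖^2 ≤ 4*δ^2*(‖a (j:ℕ) - a 0‖^2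
      + ‖a 0 - b ((τ.symm (σ j) : ℕ)+1)‖^2
      + (N:ℝ)⁻¹ * (∑ m, ‖c (j:ℕ) m - a 0‖^2) + V) := by
    intro j
    set A := Qg (σ j) (a (j:ℕ)) - Qg (σ j) (a 0) with hA
    set B := Qg (σ j) (a 0) - Qg (σ j) (b ((τ.symm (σ j) : ℕ)+1)) with hB
    set C := (N:ℝ)⁻¹ • ∑ m, (Qg m (c (j:ℕ) m) - Qg m (a 0)) with hCd
    set D := (N:ℝ)⁻¹ • ∑ m, Qg m (a 0) with hD
    have hgid : g (j:ℕ) = A + B + C + D := by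
      have hCD : C + D = (N:ℝ)⁻¹ • ∑ m, Qg m (c (j:ℕ) m) := by
        rw [hCd, hD, ← smul_add, ← Finset.sum_add_distrib]
        congr 1
        exact Finset.sum_congr rfl fun m _ => sub_add_cancel _ _
      have hAB : A + B = Qg (σ j) (a (j:ℕ)) - Qg (σ j) (b ((τ.symm (σ j) : ℕ)+1)) :=
        sub_add_sub_cancel _ _ _
      rw [add_assoc, hCD, hAB, hg]
      simp only []
      rw [dif_pos j.isLt]
    have hnA : ‖A‖ ≤ δ * ‖a (j:ℕ) - a 0‖ := hLip _ _ _
    have hnB : ‖B‖ ≤ δ * ‖a 0 - b ((τ.symm (σ j) : ℕ)+1)‖ := hLip _ _ _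
    have hnC : ‖C‖^2 ≤ δ^2 * ((N:ℝ)⁻¹ * ∑ m, ‖c (j:ℕ) m - a 0‖^2) := by
      have h1 : ‖C‖ ≤ (N:ℝ)⁻¹ * ∑ m, δ * ‖c (j:ℕ) m - a 0‖ := by
        rw [hCd, norm_smul]
        have : |((N:ℝ)⁻¹)| = (N:ℝ)⁻¹ := abs_of_nonneg (by positivity)
        rw [Real.norm_eq_abs, this]
        refine mul_le_mul_of_nonneg_left ?_ (by positivity)
        refine (norm_sum_le _ _).trans ?_
        exact Finset.sum_le_sum fun m _ => hLip _ _ _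
      have h0 : (0:ℝ) ≤ ∑ m, δ * ‖c (j:ℕ) m - a 0‖ :=
        Finset.sum_nonneg fun m _ => by positivity
      have h2 : (∑ m, δ * ‖c (j:ℕ) m - a 0‖)^2
          ≤ (N:ℝ) * ∑ m, (δ * ‖c (j:ℕ) m - a 0‖)^2 := by
        have := sq_sum_le_card_mul_sum_sq (s := (Finset.univ : Finset (Fin N)))
          (f := fun m => δ * ‖c (j:ℕ) m - a 0‖)
        simpa using this
      have h3 : ∑ m, (δ * ‖c (j:ℕ) m - a 0‖)^2 = δ^2 * ∑ m, ‖c (j:ℕ) m - a 0‖^2 := by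
        rw [Finset.mul_sum]
        exact Finset.sum_congr rfl fun m _ => by ring
      calc ‖C‖^2 ≤ ((N:ℝ)⁻¹ * ∑ m, δ * ‖c (j:ℕ) m - a 0‖)^2 :=
            pow_le_pow_left₀ (norm_nonneg _) h1 2
        _ = ((N:ℝ)⁻¹)^2 * (∑ m, δ * ‖c (j:ℕ) m - a 0‖)^2 := by ring
        _ ≤ ((N:ℝ)⁻¹)^2 * ((N:ℝ) * (δ^2 * ∑ m, ‖c (j:ℕ) m - a 0‖^2)) := by
            rw [← h3]
            exact mul_le_mul_of_nonneg_left h2 (by positivity)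
        _ = δ^2 * ((N:ℝ)⁻¹ * ∑ m, ‖c (j:ℕ) m - a 0‖^2) := by
            field_simp
            try ring
    have hnD : ‖D‖ ≤ δ * ‖wstar - a 0‖ := by
      have hD2 : D = (N:ℝ)⁻¹ • ∑ m, (Qg m (a 0) - Qg m wstar) := by
        rw [hD, Finset.sum_sub_distrib, hstar, sub_zero]
      rw [hD2, norm_smul, Real.norm_eq_abs, abs_of_nonneg (by positivity : (0:ℝ) ≤ (N:ℝ)⁻¹)]
      have h1 : ‖∑ m, (Qg m (a 0) - Qg m wstar)‖ ≤ (N:ℝ) * (δ * ‖a 0 - wstar‖) := by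
        refine (norm_sum_le _ _).trans ?_
        calc ∑ m : Fin N, ‖Qg m (a 0) - Qg m wstar‖
            ≤ ∑ _m : Fin N, δ * ‖a 0 - wstar‖ := Finset.sum_le_sum fun m _ => hLip _ _ _
          _ = (N:ℝ) * (δ * ‖a 0 - wstar‖) := by
              rw [Finset.sum_const, Finset.card_univ, Fintype.card_fin, nsmul_eq_mul]
      calc (N:ℝ)⁻¹ * ‖∑ m, (Qg m (a 0) - Qg m wstar)‖
          ≤ (N:ℝ)⁻¹ * ((N:ℝ) * (δ * ‖a 0 - wstar‖)) :=
            mul_le_mul_of_nonneg_left h1 (by positivity)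
        _ = δ * ‖a 0 - wstar‖ := by
            field_simp
        _ = δ * ‖wstar - a 0‖ := by rw [norm_sub_rev]
    have hA2 : ‖A‖^2 ≤ δ^2 * ‖a (j:ℕ) - a 0‖^2 := by
      have := pow_le_pow_left₀ (norm_nonneg A) hnA 2
      calc ‖A‖^2 ≤ (δ * ‖a (j:ℕ) - a 0‖)^2 := this
        _ = δ^2 * ‖a (j:ℕ) - a 0‖^2 := by ring
    have hB2 : ‖B‖^2 ≤ δ^2 * ‖a 0 - b ((τ.symm (σ j) : ℕ)+1)‖^2 := by
      have := pow_le_pow_left₀ (norm_nonneg B) hnB 2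
      calc ‖B‖^2 ≤ (δ * ‖a 0 - b ((τ.symm (σ j) : ℕ)+1)‖)^2 := this
        _ = δ^2 * ‖a 0 - b ((τ.symm (σ j) : ℕ)+1)‖^2 := by ring
    have hD2 : ‖D‖^2 ≤ δ^2 * V := by
      have := pow_le_pow_left₀ (norm_nonneg D) hnD 2
      calc ‖D‖^2 ≤ (δ * ‖wstar - a 0‖)^2 := this
        _ = δ^2 * V := by rw [hV]; ring
    have hn : ‖A + B + C + D‖ ≤ ‖A‖ + ‖B‖ + ‖C‖ + ‖D‖ := by
      calc ‖A + B + C + D‖ ≤ ‖A + B + C‖ + ‖D‖ := norm_add_le _ _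
        _ ≤ (‖A + B‖ + ‖C‖) + ‖D‖ := by linarith [norm_add_le (A+B) C]
        _ ≤ (‖A‖ + ‖B‖ + ‖C‖) + ‖D‖ := by linarith [norm_add_le A B]
    have hn2 : ‖A + B + C + D‖^2 ≤ (‖A‖ + ‖B‖ + ‖C‖ + ‖D‖)^2 :=
      pow_le_pow_left₀ (norm_nonneg _) hn 2
    have h4 := four_sq_aux ‖A‖ ‖B‖ ‖C‖ ‖D‖
    rw [hgid]
    linarith
  -- summed bound
  set T := ∑ j ∈ Finset.range N, ‖g j‖^2 with hT
  have hTFin : T = ∑ j : Fin N, ‖g (j:ℕ)‖^2 :=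
    (Fin.sum_univ_eq_sum_range (fun j => ‖g j‖^2) N).symm
  have hTb : T ≤ 8*δ^2*(S1+S2) + 4*δ^2*(N:ℝ)*V := by
    have hper : ∀ j : Fin N, ‖g (j:ℕ)‖^2 ≤ 4*δ^2*(‖a (j:ℕ) - a 0‖^2
        + ‖a 0 - b ((τ.symm (σ j) : ℕ)+1)‖^2 + ((N:ℝ)⁻¹ * (S1+S2) + V)) := by
      intro j
      refine (hgbound j).trans ?_
      have h1 := hCper j
      have h2 : (N:ℝ)⁻¹ * (∑ m, ‖c (j:ℕ) m - a 0‖^2) ≤ (N:ℝ)⁻¹ * (S1+S2) :=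
        mul_le_mul_of_nonneg_left h1 (by positivity)
      nlinarith [sq_nonneg δ]
    rw [hTFin]
    have hsum := Finset.sum_le_sum (fun j (_ : j ∈ Finset.univ) => hper j)
    refine hsum.trans ?_
    have hexp : ∑ j : Fin N, 4*δ^2*(‖a (j:ℕ) - a 0‖^2
        + ‖a 0 - b ((τ.symm (σ j) : ℕ)+1)‖^2 + ((N:ℝ)⁻¹ * (S1+S2) + V))
        = 4*δ^2*((∑ j : Fin N, ‖a (j:ℕ) - a 0‖^2)
          + (∑ j : Fin N, ‖a 0 - b ((τ.symm (σ j) : ℕ)+1)‖^2)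
          + (N:ℝ)*((N:ℝ)⁻¹ * (S1+S2) + V)) := by
      rw [← Finset.mul_sum]
      congr 1
      rw [Finset.sum_add_distrib, Finset.sum_add_distrib, Finset.sum_const,
        Finset.card_univ, Fintype.card_fin, nsmul_eq_mul]
      try ring
    rw [hexp]
    have hNN : (N:ℝ) * ((N:ℝ)⁻¹ * (S1+S2) + V) = (S1+S2) + (N:ℝ)*V := by
      field_simp
      try ring
    rw [hBsum, hNN]
    nlinarith [hAsum, sq_nonneg δ]
  have hTnonneg : 0 ≤ T := Finset.sum_nonneg fun j _ => sq_nonneg _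
  -- per-iterate bound
  have hiter : ∀ i ∈ Finset.Ico 1 N, ‖a i - a 0‖^2 ≤ μ^2 * i * T := by
    intro i hi
    obtain ⟨hi1, hi2⟩ := Finset.mem_Ico.mp hi
    have hrep : a i - a 0 = -(μ • ∑ j ∈ Finset.range i, g j) := by
      rw [hstep i hi2.le]
      abel
    rw [hrep, norm_neg, norm_smul, Real.norm_eq_abs]
    have hg1 : ‖∑ j ∈ Finset.range i, g j‖ ≤ ∑ j ∈ Finset.range i, ‖g j‖ :=
      norm_sum_le _ _
    have hg2 : (∑ j ∈ Finset.range i, ‖g j‖)^2 ≤ (i:ℝ) * ∑ j ∈ Finset.range i, ‖g j‖^2 := by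
      have := sq_sum_le_card_mul_sum_sq (s := Finset.range i) (f := fun j => ‖g j‖)
      simpa using this
    have hg3 : ∑ j ∈ Finset.range i, ‖g j‖^2 ≤ T :=
      Finset.sum_le_sum_of_subset_of_nonneg (Finset.range_subset_range.mpr hi2.le)
        (fun _ _ _ => sq_nonneg _)
    have hg4 : ‖∑ j ∈ Finset.range i, g j‖^2 ≤ (∑ j ∈ Finset.range i, ‖g j‖)^2 :=
      pow_le_pow_left₀ (norm_nonneg _) hg1 2
    have hi0 : (0:ℝ) ≤ (i:ℝ) := by positivity
    calc (|μ| * ‖∑ j ∈ Finset.range i, g j‖)^2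
        = μ^2 * ‖∑ j ∈ Finset.range i, g j‖^2 := by rw [mul_pow, sq_abs]
      _ ≤ μ^2 * ((i:ℝ) * T) := by
          refine mul_le_mul_of_nonneg_left ?_ (sq_nonneg μ)
          calc ‖∑ j ∈ Finset.range i, g j‖^2 ≤ (∑ j ∈ Finset.range i, ‖g j‖)^2 := hg4
            _ ≤ (i:ℝ) * ∑ j ∈ Finset.range i, ‖g j‖^2 := hg2
            _ ≤ (i:ℝ) * T := mul_le_mul_of_nonneg_left hg3 hi0
      _ = μ^2 * i * T := by ring
  -- Gauss sum
  have hIco : ∑ i ∈ Finset.Ico 1 N, (i:ℝ) ≤ (N:ℝ)^2/2 := by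
    have h1 : ∑ i ∈ Finset.Ico 1 N, (i:ℝ) = ∑ i ∈ Finset.range N, (i:ℝ) := by
      rw [Finset.range_eq_Ico, Finset.sum_eq_sum_Ico_succ_bot hNpos]
      simp
    have h3 := Finset.sum_range_id_mul_two N
    have h4 : (∑ i ∈ Finset.range N, i) * 2 ≤ N^2 := by
      rw [h3]
      calc N * (N-1) ≤ N * N := Nat.mul_le_mul_left _ (Nat.sub_le _ _)
        _ = N^2 := (sq N).symm
    have h5 : ((∑ i ∈ Finset.range N, i : ℕ) : ℝ) * 2 ≤ (N:ℝ)^2 := by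
      exact_mod_cast h4
    rw [h1, ← Nat.cast_sum]
    linarith
  have hS1f : S1 ≤ μ^2 * T * ((N:ℝ)^2/2) := by
    calc S1 ≤ ∑ i ∈ Finset.Ico 1 N, μ^2 * i * T := Finset.sum_le_sum hiter
      _ = μ^2 * T * ∑ i ∈ Finset.Ico 1 N, (i:ℝ) := by
          rw [Finset.mul_sum]
          exact Finset.sum_congr rfl fun i _ => by ring
      _ ≤ μ^2 * T * ((N:ℝ)^2/2) :=
          mul_le_mul_of_nonneg_left hIco (mul_nonneg (sq_nonneg μ) hTnonneg)
  have hS1nn : 0 ≤ S1 := Finset.sum_nonneg fun i _ => sq_nonneg _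
  have hS2nn : 0 ≤ S2 := Finset.sum_nonneg fun i _ => sq_nonneg _
  have hVnn : 0 ≤ V := sq_nonneg _
  have hmulT : μ^2 * T * ((N:ℝ)^2/2) ≤ μ^2 * (8*δ^2*(S1+S2) + 4*δ^2*(N:ℝ)*V) * ((N:ℝ)^2/2) := by
    have h := mul_le_mul_of_nonneg_left hTb (sq_nonneg μ)
    exact mul_le_mul_of_nonneg_right h (by positivity : (0:ℝ) ≤ (N:ℝ)^2/2)
  have key : μ^2 * (8*δ^2*(S1+S2) + 4*δ^2*(N:ℝ)*V) * ((N:ℝ)^2/2)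
      = 4*(δ^2*μ^2*(N:ℝ)^2*(S1+S2)) + 2*(δ^2*μ^2*(N:ℝ)^3*V) := by ring
  have hX : 0 ≤ δ^2*μ^2*(N:ℝ)^2*(S1+S2) :=
    mul_nonneg (by positivity) (add_nonneg hS1nn hS2nn)
  have hY : 0 ≤ δ^2*μ^2*(N:ℝ)^3*V := mul_nonneg (by positivity) hVnn
  clear_value S1 S2 V T c g
  linarith [hS1f, hmulT, key, hX, hY]

open MeasureTheory Finset

noncomputable def eIter {N : ℕ} {E : Type*} [AddCommGroup E] [Module ℝ E]
    (Qg : Fin N → E → E) (μ : ℝ) (π : Equiv.Perm (Fin N)) (G : Fin N → E) (v0 : E) : ℕ → E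
  | 0 => v0
  | (k+1) =>
    if h : k < N then
      eIter Qg μ π G v0 k - μ • (Qg (π ⟨k,h⟩) (eIter Qg μ π G v0 k) - G (π ⟨k,h⟩)
        + (N:ℝ)⁻¹ • ∑ m, (if h2 : ((π.symm m : Fin N):ℕ) < k
            then Qg m (eIter Qg μ π G v0 ((π.symm m : ℕ)+1)) else G m))
    else eIter Qg μ π G v0 k
  decreasing_by all_goals omega

lemma preimage_measurable_of_finite {Ω α : Type*} [MeasurableSpace Ω] {f : Ω → α}
    (hfin : (Set.range f).Finite) (hfib : ∀ a, MeasurableSet (f ⁻¹' {a})) :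
    ∀ S : Set α, MeasurableSet (f ⁻¹' S) := by
  classical
  intro S
  have h : f ⁻¹' S = ⋃ a ∈ hfin.toFinset.filter (· ∈ S), f ⁻¹' {a} := by
    ext ω
    simp only [Set.mem_preimage, Set.mem_iUnion, Finset.mem_filter,
      Set.Finite.mem_toFinset, Set.mem_range, Set.mem_singleton_iff]
    constructor
    · intro h; exact ⟨f ω, ⟨⟨ω, rfl⟩, h⟩, rfl⟩
    · rintro ⟨a, ⟨_, haS⟩, h⟩; rw [h]; exact haS
  rw [h]
  exact (hfin.toFinset.filter _).measurableSet_biUnion (fun a _ => hfib a)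

lemma integrable_comp_finite {Ω α : Type*} [MeasurableSpace Ω] (P : Measure Ω)
    [IsFiniteMeasure P] {f : Ω → α}
    (hmeas : ∀ S : Set α, MeasurableSet (f ⁻¹' S)) (hfin : (Set.range f).Finite)
    (g : α → ℝ) : Integrable (fun ω => g (f ω)) P := by
  have hm : Measurable (fun ω => g (f ω)) := fun S _ => hmeas (g ⁻¹' S)
  have hfin2 : ((fun x => |g x|) '' Set.range f).Finite := hfin.image _
  obtain ⟨C, hC⟩ := hfin2.bddAbove
  refine (integrable_const C).mono' hm.aestronglyMeasurable
    (Filter.Eventually.of_forall fun ω => ?_)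
  simpa [Real.norm_eq_abs] using hC ⟨f ω, ⟨ω, rfl⟩, rfl⟩

/-
Setup: SAGA under random reshuffling (SAGA-RR).
`σp t` is the uniformly distributed random permutation of epoch `t` (0-based:
`σp t ω i` is the sample index σ^t(i+1) selected at iteration `i` of epoch `t`);
`w t i ω` is the iterate w_i^t and `φv t i n ω` the history variable φ_{i,n}^t.
`Qg n` is the gradient of the loss w ↦ Q(w; x_n), δ its Lipschitz constant,
ν the strong-convexity constant of J = (1/N)∑ₙ Q(·; xₙ), and `wstar` the
minimizer of J.
-/
theorem stmt_3
    {M N : ℕ} (hM : 1 ≤ M) (hN : 1 ≤ N)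
    {Ω : Type} [MeasurableSpace Ω] (P : Measure Ω) [IsProbabilityMeasure P]
    (σp : ℕ → Ω → Equiv.Perm (Fin N))
    (hσmeas : ∀ t, @Measurable Ω (Equiv.Perm (Fin N)) _ ⊤ (σp t))
    (hσunif : ∀ t (π : Equiv.Perm (Fin N)),
      P {ω | σp t ω = π} = ((Nat.factorial N : ℝ≥0∞))⁻¹)
    (hσindep : iIndepFun (m := fun _ : ℕ => (⊤ : MeasurableSpace (Equiv.Perm (Fin N)))) σp P)
    (Q : Fin N → EuclideanSpace ℝ (Fin M) → ℝ)
    (Qg : Fin N → EuclideanSpace ℝ (Fin M) → EuclideanSpace ℝ (Fin M))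
    (δ ν : ℝ) (hδ : 0 < δ) (hν : 0 < ν)
    (hQdiff : ∀ n x, HasGradientAt (Q n) (Qg n x) x)
    (hQconv : ∀ n, ConvexOn ℝ Set.univ (Q n))
    (hLip : ∀ n x y, ‖Qg n x - Qg n y‖ ≤ δ * ‖x - y‖)
    (hSC : ∀ x y : EuclideanSpace ℝ (Fin M),
      ν * ‖x - y‖ ^ 2 ≤ ⟪((N : ℝ)⁻¹ • ∑ n, Qg n x) - ((N : ℝ)⁻¹ • ∑ n, Qg n y), x - y⟫)
    (wstar : EuclideanSpace ℝ (Fin M))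
    (hstar : ∑ n, Qg n wstar = 0)
    (μ : ℝ) (hμpos : 0 < μ)
    (w : ℕ → ℕ → Ω → EuclideanSpace ℝ (Fin M))
    (φv : ℕ → ℕ → Fin N → Ω → EuclideanSpace ℝ (Fin M))
    (hw00 : ∀ ω, w 0 0 ω = 0)
    (hφ00 : ∀ n ω, Qg n (φv 0 0 n ω) = 0)
    (hwrec : ∀ (t : ℕ) (i : Fin N) (ω : Ω),
      w t ((i : ℕ) + 1) ω = w t (i : ℕ) ω - μ •
        (Qg (σp t ω i) (w t (i : ℕ) ω) - Qg (σp t ω i) (φv t (i : ℕ) (σp t ω i) ω)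
          + (N : ℝ)⁻¹ • ∑ m, Qg m (φv t (i : ℕ) m ω)))
    (hφrec1 : ∀ (t : ℕ) (i : Fin N) (ω : Ω),
      φv t ((i : ℕ) + 1) (σp t ω i) ω = w t ((i : ℕ) + 1) ω)
    (hφrec2 : ∀ (t : ℕ) (i : Fin N) (m : Fin N) (ω : Ω), m ≠ σp t ω i →
      φv t ((i : ℕ) + 1) m ω = φv t (i : ℕ) m ω)
    (hwepoch : ∀ (t : ℕ) (ω : Ω), w (t + 1) 0 ω = w t N ω)
    (hφepoch : ∀ (t : ℕ) (m : Fin N) (ω : Ω), φv (t + 1) 0 m ω = φv t N m ω)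
    :
    -- Forward inner-difference bound.
    ∀ t : ℕ, 1 ≤ t →
      ∑ i ∈ Finset.Ico 1 N, ∫ ω, ‖w t i ω - w t 0 ω‖ ^ 2 ∂P ≤
        5 * δ ^ 2 * μ ^ 2 * N ^ 2 *
            ((∑ i ∈ Finset.Ico 1 N, ∫ ω, ‖w t i ω - w t 0 ω‖ ^ 2 ∂P) +
              ∑ i ∈ Finset.Ico 1 N, ∫ ω, ‖w (t - 1) N ω - w (t - 1) i ω‖ ^ 2 ∂P) +
          3 * δ ^ 2 * μ ^ 2 * N ^ 3 * ∫ ω, ‖wstar - w t 0 ω‖ ^ 2 ∂P := by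
    classical
  intro t ht
  obtain ⟨s, rfl⟩ : ∃ s, t = s + 1 := ⟨t - 1, (Nat.succ_pred_eq_of_pos ht).symm⟩
  simp only [Nat.add_sub_cancel]
  -- characterization of the history variables within an epoch
  have char : ∀ (r : ℕ) (ω : Ω) (j : ℕ), j ≤ N → ∀ m : Fin N,
      φv r j m ω = if (((σp r ω).symm m : Fin N) : ℕ) < j
        then w r ((((σp r ω).symm m : Fin N) : ℕ)+1) ω else φv r 0 m ω := by
    intro r ω j
    induction j with
    | zero => intro _ m; simp
    | succ k ih =>
      intro hk m
      have hkN : k < N := hk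
      by_cases hm : m = σp r ω ⟨k, hkN⟩
      · have hsymm : (σp r ω).symm (σp r ω ⟨k,hkN⟩) = ⟨k,hkN⟩ := Equiv.symm_apply_apply _ _
        rw [hm, hφrec1 r ⟨k,hkN⟩ ω, hsymm, if_pos (Nat.lt_succ_self k)]
      · rw [hφrec2 r ⟨k,hkN⟩ m ω hm, ih (Nat.le_of_succ_le hk) m]
        have hne : (((σp r ω).symm m : Fin N) : ℕ) ≠ k := by
          intro hEq
          apply hm
          have h1 : (σp r ω).symm m = ⟨k, hkN⟩ := Fin.ext hEq
          calc m = σp r ω ((σp r ω).symm m) := (Equiv.apply_symm_apply _ _).symm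
            _ = σp r ω ⟨k,hkN⟩ := by rw [h1]
        by_cases hlt : (((σp r ω).symm m : Fin N) : ℕ) < k
        · rw [if_pos hlt, if_pos (Nat.lt_succ_of_lt hlt)]
        · rw [if_neg hlt, if_neg (by omega)]
  have hφN : ∀ (r : ℕ) (ω : Ω) (m : Fin N),
      φv r N m ω = w r ((((σp r ω).symm m : Fin N) : ℕ)+1) ω := by
    intro r ω m
    rw [char r ω N le_rfl m, if_pos ((σp r ω).symm m).isLt]
  have hφ0 : ∀ (r : ℕ) (ω : Ω) (m : Fin N),
      φv (r+1) 0 m ω = w r ((((σp r ω).symm m : Fin N) : ℕ)+1) ω :=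
    fun r ω m => (hφepoch r m ω).trans (hφN r ω m)
  -- representation of the iterates by the deterministic recursion
  have hrep : ∀ (r : ℕ) (ω : Ω) (k : ℕ), k ≤ N →
      w r k ω = eIter Qg μ (σp r ω) (fun m => Qg m (φv r 0 m ω)) (w r 0 ω) k := by
    intro r ω k
    induction k using Nat.strong_induction_on with
    | _ k ih =>
      intro hk
      match k with
      | 0 => rw [eIter]
      | (k'+1) =>
        have hk' : k' < N := hk
        have hkle : k' ≤ N := hk'.le
        rw [eIter]
        rw [dif_pos hk']
        have e0 : eIter Qg μ (σp r ω) (fun m => Qg m (φv r 0 m ω)) (w r 0 ω) k'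
            = w r k' ω := (ih k' (Nat.lt_succ_self k') hkle).symm
        have eφn : φv r k' (σp r ω ⟨k', hk'⟩) ω = φv r 0 (σp r ω ⟨k', hk'⟩) ω := by
          rw [char r ω k' hkle, Equiv.symm_apply_apply]
          exact if_neg (lt_irrefl k')
        have eφm : ∀ m : Fin N, Qg m (φv r k' m ω) =
            (if h2 : (((σp r ω).symm m : Fin N):ℕ) < k'
              then Qg m (eIter Qg μ (σp r ω) (fun m => Qg m (φv r 0 m ω)) (w r 0 ω)
                ((((σp r ω).symm m : Fin N) : ℕ)+1))
              else (fun m => Qg m (φv r 0 m ω)) m) := by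
          intro m
          rw [char r ω k' hkle m]
          by_cases h2 : (((σp r ω).symm m : Fin N):ℕ) < k'
          · rw [if_pos h2, dif_pos h2,
              ih ((((σp r ω).symm m : Fin N):ℕ)+1) (by omega)
                (by have := ((σp r ω).symm m).isLt; omega)]
          · rw [if_neg h2, dif_neg h2]
        have esum : ∑ m, Qg m (φv r k' m ω)
            = ∑ m, (if h2 : (((σp r ω).symm m : Fin N):ℕ) < k'
              then Qg m (eIter Qg μ (σp r ω) (fun m => Qg m (φv r 0 m ω)) (w r 0 ω)
                ((((σp r ω).symm m : Fin N) : ℕ)+1))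
              else (fun m => Qg m (φv r 0 m ω)) m) :=
          Finset.sum_congr rfl fun m _ => eφm m
        have hw := hwrec r ⟨k', hk'⟩ ω
        rw [e0]
        calc w r (k'+1) ω
            = w r k' ω - μ • (Qg (σp r ω ⟨k', hk'⟩) (w r k' ω)
                - Qg (σp r ω ⟨k', hk'⟩) (φv r k' (σp r ω ⟨k', hk'⟩) ω)
              + (N : ℝ)⁻¹ • ∑ m, Qg m (φv r k' m ω)) := hw
          _ = _ := by rw [eφn, esum]
  -- representation through (finitely many) permutations
  have hRep : ∀ r : ℕ, ∃ F : (ℕ → Equiv.Perm (Fin N)) → ℕ → (EuclideanSpace ℝ (Fin M)),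
      ∀ ω : Ω, ∀ k, k ≤ N → F (fun u => if u ≤ r then σp u ω else 1) k = w r k ω := by
    intro r
    induction r with
    | zero =>
      refine ⟨fun p k => eIter Qg μ (p 0) (fun _ => 0) 0 k, fun ω k hk => ?_⟩
      have h1 : w 0 k ω = eIter Qg μ (σp 0 ω) (fun m => Qg m (φv 0 0 m ω)) (w 0 0 ω) k :=
        hrep 0 ω k hk
      have h2 : (fun m : Fin N => Qg m (φv 0 0 m ω))
          = fun _ => (0 : EuclideanSpace ℝ (Fin M)) := funext fun m => hφ00 m ω
      rw [h1, hw00 ω, h2]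
      simp
    | succ q ihs =>
      obtain ⟨F, hF⟩ := ihs
      refine ⟨fun p k => eIter Qg μ (p (q+1))
        (fun m => Qg m (F (fun u => if u ≤ q then p u else 1) ((((p q).symm m : Fin N) : ℕ)+1)))
        (F (fun u => if u ≤ q then p u else 1) N) k, fun ω k hk => ?_⟩
      simp only []
      have htr : (fun u => if u ≤ q then (if u ≤ q+1 then σp u ω else 1) else 1)
          = (fun u => if u ≤ q then σp u ω else 1) := by
        funext u; by_cases hu : u ≤ q
        · simp [hu, Nat.le_succ_of_le hu]
        · simp [hu]
      rw [htr, if_pos (le_refl (q+1)), if_pos (Nat.le_succ q), hF ω N le_rfl]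
      have hG : (fun m : Fin N => Qg m (F (fun u => if u ≤ q then σp u ω else 1)
            ((((σp q ω).symm m : Fin N) : ℕ)+1)))
          = fun m : Fin N => Qg m (φv (q+1) 0 m ω) := by
        funext m
        rw [hF ω ((((σp q ω).symm m : Fin N) : ℕ)+1)
          (by have := ((σp q ω).symm m).isLt; omega), hφ0 q ω m]
      rw [hG, ← hwepoch q ω, ← hrep (q+1) ω k hk]
  -- measurability of truncated permutation histories
  have htrunc : ∀ r : ℕ,
      (∀ S : Set (ℕ → Equiv.Perm (Fin N)),
        MeasurableSet ((fun ω => (fun u => if u ≤ r then σp u ω else 1)) ⁻¹' S))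
      ∧ (Set.range (fun ω => (fun u : ℕ => if u ≤ r then σp u ω else 1))).Finite := by
    intro r
    have hfin : (Set.range (fun ω => (fun u : ℕ => if u ≤ r then σp u ω else 1))).Finite := by
      have hsub : Set.range (fun ω => (fun u : ℕ => if u ≤ r then σp u ω else 1))
          ⊆ Set.range (fun q : Fin (r+1) → Equiv.Perm (Fin N) =>
            (fun u : ℕ => if h : u ≤ r then q ⟨u, by omega⟩ else 1)) := by
        rintro p ⟨ω, rfl⟩
        refine ⟨fun v => σp (v : ℕ) ω, ?_⟩
        funext u; by_cases hu : u ≤ r <;> simp [hu]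
      exact (Set.finite_range _).subset hsub
    refine ⟨preimage_measurable_of_finite hfin ?_, hfin⟩
    intro p
    have hset : (fun ω => (fun u : ℕ => if u ≤ r then σp u ω else 1)) ⁻¹' {p}
        = ⋂ u : ℕ, {ω | (if u ≤ r then σp u ω else 1) = p u} := by
      ext ω
      simp only [Set.mem_preimage, Set.mem_singleton_iff, Set.mem_iInter, Set.mem_setOf_eq,
        funext_iff]
    rw [hset]
    refine MeasurableSet.iInter fun u => ?_
    by_cases hu : u ≤ r
    · simp only [if_pos hu]
      exact hσmeas u (by trivial : MeasurableSet[⊤] {p u})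
    · simp only [if_neg hu]
      by_cases h1 : (1 : Equiv.Perm (Fin N)) = p u
      · simp [h1]
      · simp [h1]
  have hInt : ∀ (r : ℕ) (g : (ℕ → Equiv.Perm (Fin N)) → ℝ),
      Integrable (fun ω => g (fun u => if u ≤ r then σp u ω else 1)) P :=
    fun r g => integrable_comp_finite P (htrunc r).1 (htrunc r).2 g
  -- integrability of all integrands
  have hIw : ∀ i, i ≤ N → Integrable (fun ω => ‖w (s+1) i ω - w (s+1) 0 ω‖^2) P := by
    intro i hi
    obtain ⟨F, hF⟩ := hRep (s+1)
    have : (fun ω => ‖w (s+1) i ω - w (s+1) 0 ω‖^2)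
        = fun ω => (fun p => ‖F p i - F p 0‖^2) (fun u => if u ≤ s+1 then σp u ω else 1) :=
      funext fun ω => by simp only []; rw [hF ω i hi, hF ω 0 (Nat.zero_le N)]
    rw [this]
    exact hInt (s+1) (fun p => ‖F p i - F p 0‖^2)
  have hIb : ∀ i, i ≤ N → Integrable (fun ω => ‖w s N ω - w s i ω‖^2) P := by
    intro i hi
    obtain ⟨F, hF⟩ := hRep s
    have : (fun ω => ‖w s N ω - w s i ω‖^2)
        = fun ω => (fun p => ‖F p N - F p i‖^2) (fun u => if u ≤ s then σp u ω else 1) :=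
      funext fun ω => by simp only []; rw [hF ω i hi, hF ω N le_rfl]
    rw [this]
    exact hInt s (fun p => ‖F p N - F p i‖^2)
  have hIV : Integrable (fun ω => ‖wstar - w (s+1) 0 ω‖^2) P := by
    obtain ⟨F, hF⟩ := hRep (s+1)
    have : (fun ω => ‖wstar - w (s+1) 0 ω‖^2)
        = fun ω => (fun p => ‖wstar - F p 0‖^2) (fun u => if u ≤ s+1 then σp u ω else 1) :=
      funext fun ω => by simp only []; rw [hF ω 0 (Nat.zero_le N)]
    rw [this]
    exact hInt (s+1) (fun p => ‖wstar - F p 0‖^2)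
  -- pointwise inequality
  have hpt : ∀ ω, (∑ i ∈ Finset.Ico 1 N, ‖w (s+1) i ω - w (s+1) 0 ω‖^2) ≤
      5*δ^2*μ^2*(N:ℝ)^2*((∑ i ∈ Finset.Ico 1 N, ‖w (s+1) i ω - w (s+1) 0 ω‖^2)
        + ∑ i ∈ Finset.Ico 1 N, ‖w s N ω - w s i ω‖^2)
      + 3*δ^2*μ^2*(N:ℝ)^3*‖wstar - w (s+1) 0 ω‖^2 := by
    intro ω
    have hrec' : ∀ i : Fin N, w (s+1) ((i:ℕ)+1) ω = w (s+1) (i:ℕ) ω - μ •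
        (Qg (σp (s+1) ω i) (w (s+1) (i:ℕ) ω)
          - Qg (σp (s+1) ω i) (w s ((((σp s ω).symm (σp (s+1) ω i) : Fin N):ℕ) + 1) ω)
          + (N:ℝ)⁻¹ • ∑ m, Qg m (if (((σp (s+1) ω).symm m : Fin N) : ℕ) < (i:ℕ)
              then w (s+1) ((((σp (s+1) ω).symm m : Fin N):ℕ)+1) ω
              else w s ((((σp s ω).symm m : Fin N):ℕ)+1) ω)) := by
      intro i
      have h1 : φv (s+1) (i:ℕ) (σp (s+1) ω i) ω
          = w s ((((σp s ω).symm (σp (s+1) ω i) : Fin N):ℕ)+1) ω := by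
        rw [char (s+1) ω (i:ℕ) i.isLt.le, Equiv.symm_apply_apply, if_neg (lt_irrefl _),
          hφ0 s ω]
      have h2 : ∀ m : Fin N, φv (s+1) (i:ℕ) m ω
          = if (((σp (s+1) ω).symm m : Fin N):ℕ) < (i:ℕ)
            then w (s+1) ((((σp (s+1) ω).symm m : Fin N):ℕ)+1) ω
            else w s ((((σp s ω).symm m : Fin N):ℕ)+1) ω := by
        intro m
        rw [char (s+1) ω (i:ℕ) i.isLt.le m]
        split_ifs with h
        · rfl
        · exact hφ0 s ω m
      have h3 : ∑ m, Qg m (φv (s+1) (i:ℕ) m ω)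
          = ∑ m, Qg m (if (((σp (s+1) ω).symm m : Fin N):ℕ) < (i:ℕ)
            then w (s+1) ((((σp (s+1) ω).symm m : Fin N):ℕ)+1) ω
            else w s ((((σp s ω).symm m : Fin N):ℕ)+1) ω) :=
        Finset.sum_congr rfl fun m _ => by rw [h2 m]
      rw [hwrec (s+1) i ω, h1, h3]
    have hi' : Fin N → Fin N := id
    exact saga_pointwise hN Qg δ hδ hLip wstar hstar μ hμpos (σp (s+1) ω) (σp s ω)
      (fun i => w (s+1) i ω) (fun i => w s i ω) (hwepoch s ω) hrec'
  -- integrate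
  have hmemIco : ∀ i ∈ Finset.Ico 1 N, i ≤ N := fun i hi =>
    ((Finset.mem_Ico.mp hi).2).le
  have hIF : Integrable (fun ω => ∑ i ∈ Finset.Ico 1 N, ‖w (s+1) i ω - w (s+1) 0 ω‖^2) P :=
    integrable_finset_sum _ (fun i hi => hIw i (hmemIco i hi))
  have hIG : Integrable (fun ω => ∑ i ∈ Finset.Ico 1 N, ‖w s N ω - w s i ω‖^2) P :=
    integrable_finset_sum _ (fun i hi => hIb i (hmemIco i hi))
  have hsum1 : ∑ i ∈ Finset.Ico 1 N, ∫ ω, ‖w (s+1) i ω - w (s+1) 0 ω‖^2 ∂P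
      = ∫ ω, ∑ i ∈ Finset.Ico 1 N, ‖w (s+1) i ω - w (s+1) 0 ω‖^2 ∂P :=
    (integral_finset_sum _ (fun i hi => hIw i (hmemIco i hi))).symm
  have hsum2 : ∑ i ∈ Finset.Ico 1 N, ∫ ω, ‖w s N ω - w s i ω‖^2 ∂P
      = ∫ ω, ∑ i ∈ Finset.Ico 1 N, ‖w s N ω - w s i ω‖^2 ∂P :=
    (integral_finset_sum _ (fun i hi => hIb i (hmemIco i hi))).symm
  have hI1 : Integrable (fun ω =>
      5*δ^2*μ^2*(N:ℝ)^2*((∑ i ∈ Finset.Ico 1 N, ‖w (s+1) i ω - w (s+1) 0 ω‖^2)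
        + ∑ i ∈ Finset.Ico 1 N, ‖w s N ω - w s i ω‖^2)) P := by
    exact (hIF.add hIG).const_mul _
  have hI2 : Integrable (fun ω => 3*δ^2*μ^2*(N:ℝ)^3*‖wstar - w (s+1) 0 ω‖^2) P := by
    exact hIV.const_mul _
  have hIsum : Integrable (fun ω => (∑ i ∈ Finset.Ico 1 N, ‖w (s+1) i ω - w (s+1) 0 ω‖^2)
        + ∑ i ∈ Finset.Ico 1 N, ‖w s N ω - w s i ω‖^2) P := by
    exact hIF.add hIG
  have hIRHS : Integrable (fun ω =>
      5*δ^2*μ^2*(N:ℝ)^2*((∑ i ∈ Finset.Ico 1 N, ‖w (s+1) i ω - w (s+1) 0 ω‖^2)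
        + ∑ i ∈ Finset.Ico 1 N, ‖w s N ω - w s i ω‖^2)
      + 3*δ^2*μ^2*(N:ℝ)^3*‖wstar - w (s+1) 0 ω‖^2) P :=
    by exact hI1.add hI2
  have hmono := integral_mono hIF hIRHS hpt
  have hsplit : ∫ ω, (5*δ^2*μ^2*(N:ℝ)^2*((∑ i ∈ Finset.Ico 1 N, ‖w (s+1) i ω - w (s+1) 0 ω‖^2)
        + ∑ i ∈ Finset.Ico 1 N, ‖w s N ω - w s i ω‖^2)
      + 3*δ^2*μ^2*(N:ℝ)^3*‖wstar - w (s+1) 0 ω‖^2) ∂P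
      = 5*δ^2*μ^2*(N:ℝ)^2*((∫ ω, ∑ i ∈ Finset.Ico 1 N, ‖w (s+1) i ω - w (s+1) 0 ω‖^2 ∂P)
        + ∫ ω, ∑ i ∈ Finset.Ico 1 N, ‖w s N ω - w s i ω‖^2 ∂P)
      + 3*δ^2*μ^2*(N:ℝ)^3*(∫ ω, ‖wstar - w (s+1) 0 ω‖^2 ∂P) := by
    rw [integral_add hI1 hI2, integral_const_mul, integral_const_mul,
      integral_add hIF hIG]
  rw [hsum1, hsum2]
  rw [hsplit] at hmono
  exact hmono
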